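/- Let H be a subgraph of G whose vertex set is the union of the endpoint sets of some edges of M, and let P be a feasible path with end-vertices u and v such that either P is vertex-disjoint from H, or P consists of the single matching edge uv ∈ M_0 and lies in H. Let f = u′v′ be an edge of M_0(H) vertex-disjoint from P, and set R = {u, v, u′, v′}. Suppose that for every edge g ∈ M_0(H) vertex-disjoint from P, there is no feasible cycle C of M_0-length l_{M_0}(P) + 1 with V(P) ∪ V(g) ⊆ V(C). Then e(R, V(M_0(H))) ≤ e({u,v}, f) + 3|M_0(H)| − 1. Moreover, if P is the single edge uv ∈ M_0(H) and the subgraph induced by V(H) contains no feasible cycle of M_0-length 2, then e(R, V(M_0(H))) ≤ 2|M_0(H)| when e(f, P) = 0, and e(R, V(M_0(H))) ≤ 2|M_0(H)| + 2 when e(f, P) = 1. -/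

import Mathlib

/-- `e(S, T)`: the number of edges of `G` with one end in `S` and the other in `T`. -/
noncomputable def eBtw {V : Type*} (G : SimpleGraph V) (S T : Set V) : ℕ :=
  {e : Sym2 V | e ∈ G.edgeSet ∧ ∃ a b, e = s(a, b) ∧ a ∈ S ∧ b ∈ T}.ncard

/-- The set of vertices `{xᵢ, yᵢ : i ∈ F}` corresponding to a set `F` of matching
indices; here `Sum.inl i` plays the role of `xᵢ ∈ X` and `Sum.inr i` of `yᵢ ∈ Y`. -/
def iVerts {α : Type*} (F : Set α) : Set (α ⊕ α) :=
  {w | ∃ i ∈ F, w = Sum.inl i ∨ w = Sum.inr i}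

/-- An `M`-alternating cycle `x_{i₁} y_{i₁} x_{i₂} y_{i₂} ⋯ x_{i_r} y_{i_r} x_{i₁}`
(where `M = {xᵢyᵢ}` is the perfect matching), encoded by its list of matching
indices `i₁, …, i_r`: consecutive (cyclically) indices are joined by the non-matching
edges `y_{i_j} x_{i_{j+1}}`.  Such a cycle has `2 * l.length` edges, `l.length` of
which are matching edges. -/
def AltCycle {α : Type*} (G : SimpleGraph (α ⊕ α)) (l : List α) : Prop :=
  2 ≤ l.length ∧ l.Nodup ∧
    ∀ i : Fin l.length,
      G.Adj (Sum.inr (l.get i))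
        (Sum.inl (l.get ⟨((i : ℕ) + 1) % l.length, Nat.mod_lt _ i.pos⟩))

/-- An `M`-alternating path `x_{i₁} y_{i₁} ⋯ x_{i_r} y_{i_r}` beginning and ending
with matching edges, encoded by its list of matching indices. -/
def AltPath {α : Type*} (G : SimpleGraph (α ⊕ α)) (l : List α) : Prop :=
  l ≠ [] ∧ l.Nodup ∧ l.Chain' (fun a b => G.Adj (Sum.inr a) (Sum.inl b))

/-- A feasible path: an `M`-alternating path `x_{i₁} y_{i₁} ⋯ x_{i_r} y_{i_r}` whose
end-vertices `x_{i₁}` and `y_{i_r}` belong to `V(M₀)`, where `S` is the index set of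
`M₀ ⊆ M`. -/
def FeasPath {α : Type*} [DecidableEq α] (G : SimpleGraph (α ⊕ α)) (S : Finset α)
    (l : List α) : Prop :=
  AltPath G l ∧ ∀ h : l ≠ [], l.head h ∈ S ∧ l.getLast h ∈ S


open Sum

section AuxLemmas

def ES {V : Type*} (G : SimpleGraph V) (S T : Set V) : Set (Sym2 V) :=
  {e | e ∈ G.edgeSet ∧ ∃ a b, e = s(a, b) ∧ a ∈ S ∧ b ∈ T}

lemma eBtw_eq_ES {V : Type*} (G : SimpleGraph V) (S T : Set V) :
    eBtw G S T = (ES G S T).ncard := rfl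

lemma ES_comm {V : Type*} (G : SimpleGraph V) (S T : Set V) : ES G S T = ES G T S := by
  ext e
  constructor <;> rintro ⟨he, a, b, rfl, ha, hb⟩ <;>
    exact ⟨by rwa [Sym2.eq_swap] at he ⊢, b, a, Sym2.eq_swap, hb, ha⟩

lemma ncard_biUnion_le {α β : Type*} [Finite β] (F : Finset α) (f : α → Set β) :
    (⋃ i ∈ F, f i).ncard ≤ ∑ i ∈ F, (f i).ncard := by
  classical
  induction F using Finset.induction with
  | empty => simp
  | insert a s h ih =>
    rw [Finset.sum_insert h, Finset.set_biUnion_insert]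
    exact (Set.ncard_union_le _ _).trans (by gcongr)

lemma eBtw_le_sum {n : ℕ} (G : SimpleGraph (Fin n ⊕ Fin n)) (A : Set (Fin n ⊕ Fin n))
    (F : Finset (Fin n)) :
    eBtw G A (iVerts ↑F) ≤ ∑ i ∈ F, (ES G A {inl i, inr i}).ncard := by
  rw [eBtw_eq_ES]
  refine le_trans (Set.ncard_le_ncard ?_ (Set.toFinite _)) (ncard_biUnion_le F _)
  rintro e ⟨he, x, y, rfl, hx, hy⟩
  obtain ⟨i, hiF, hy'⟩ := hy
  refine Set.mem_biUnion hiF ⟨he, x, y, rfl, hx, ?_⟩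
  rcases hy' with rfl | rfl <;> simp

variable {n : ℕ} {G : SimpleGraph (Fin n ⊕ Fin n)}
  (hX : ∀ i j : Fin n, ¬ G.Adj (Sum.inl i) (Sum.inl j))
  (hY : ∀ i j : Fin n, ¬ G.Adj (Sum.inr i) (Sum.inr j))

include hX hY in
lemma ES_pair_subset (p q j : Fin n) :
    ES G {inl p, inr q} {inl j, inr j} ⊆ {s(inl p, inr j), s(inr q, inl j)} := by
  rintro e ⟨he, x, y, rfl, hx, hy⟩
  rw [SimpleGraph.mem_edgeSet] at he
  simp only [Set.mem_insert_iff, Set.mem_singleton_iff] at hx hy ⊢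
  rcases hx with rfl | rfl <;> rcases hy with rfl | rfl
  · exact absurd he (hX _ _)
  · left; rfl
  · right; rfl
  · exact absurd he (hY _ _)

include hX hY in
lemma ES_pair_le_one {p q j : Fin n}
    (hnb : ¬ (G.Adj (inl p) (inr j) ∧ G.Adj (inr q) (inl j))) :
    (ES G {inl p, inr q} {inl j, inr j}).ncard ≤ 1 := by
  by_cases h1 : G.Adj (inl p) (inr j)
  · have hsub : ES G {inl p, inr q} {inl j, inr j} ⊆ {s(inl p, inr j)} := by
      intro e he
      rcases ES_pair_subset hX hY p q j he with h | h
      · exact h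
      · have h' : e = s(inr q, inl j) := h
        have hee : e ∈ G.edgeSet := he.1
        rw [h', SimpleGraph.mem_edgeSet] at hee
        exact absurd hee (fun hh => hnb ⟨h1, hh⟩)
    simpa using Set.ncard_le_ncard hsub (Set.toFinite _)
  · have hsub : ES G {inl p, inr q} {inl j, inr j} ⊆ {s(inr q, inl j)} := by
      intro e he
      rcases ES_pair_subset hX hY p q j he with h | h
      · have hee : e ∈ G.edgeSet := he.1
        rw [h, SimpleGraph.mem_edgeSet] at hee
        exact absurd hee h1
      · exact h
    simpa using Set.ncard_le_ncard hsub (Set.toFinite _)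

include hX hY in
lemma ES_pair_le_two (p q j : Fin n) :
    (ES G {inl p, inr q} {inl j, inr j}).ncard ≤ 2 := by
  refine le_trans (Set.ncard_le_ncard (ES_pair_subset hX hY p q j) (Set.toFinite _)) ?_
  refine (Set.ncard_insert_le _ _).trans ?_
  simp

include hX hY in
lemma ES_diag_le_one (j : Fin n) :
    (ES G {inl j, inr j} {inl j, inr j}).ncard ≤ 1 := by
  have hsub : ES G {inl j, inr j} {inl j, inr j} ⊆ {s(inl j, inr j)} := by
    intro e he
    rcases ES_pair_subset hX hY j j j he with h | h
    · exact h
    · rw [h, Sym2.eq_swap]; rfl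
  simpa using Set.ncard_le_ncard hsub (Set.toFinite _)

lemma ES_R_split (u v b : Fin n) (T' : Set (Fin n ⊕ Fin n)) :
    ES G {inl u, inr v, inl b, inr b} T' ⊆
      ES G {inl u, inr v} T' ∪ ES G {inl b, inr b} T' := by
  rintro e ⟨he, x, y, rfl, hx, hy⟩
  simp only [Set.mem_insert_iff, Set.mem_singleton_iff] at hx
  rcases hx with rfl | rfl | rfl | rfl
  · exact Or.inl ⟨he, _, _, rfl, by simp, hy⟩
  · exact Or.inl ⟨he, _, _, rfl, by simp, hy⟩
  · exact Or.inr ⟨he, _, _, rfl, by simp, hy⟩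
  · exact Or.inr ⟨he, _, _, rfl, by simp, hy⟩

lemma ncard_le_add {β : Type*} [Finite β] {s t u : Set β} (h : s ⊆ t ∪ u) :
    s.ncard ≤ t.ncard + u.ncard :=
  (Set.ncard_le_ncard h (Set.toFinite _)).trans (Set.ncard_union_le _ _)

lemma altCycle_append (G : SimpleGraph (Fin n ⊕ Fin n))
    (l : List (Fin n)) (hne : l ≠ []) (hl : l.Nodup)
    (hch : l.Chain' (fun a b => G.Adj (inr a) (inl b))) (j : Fin n) (hj : j ∉ l)
    (h1 : G.Adj (inr (l.getLast hne)) (inl j)) (h2 : G.Adj (inr j) (inl (l.head hne))) :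
    AltCycle G (l ++ [j]) := by
  have hL : 0 < l.length := List.length_pos_iff.2 hne
  refine ⟨by simp; omega, by simp [List.nodup_append, hl, hj]; exact fun a ha h => hj (h ▸ ha), ?_⟩
  rintro ⟨iv, hiv⟩
  simp only [List.get_eq_getElem, List.length_append, List.length_singleton] at hiv ⊢
  rw [List.getLast_eq_getElem] at h1
  rw [List.head_eq_getElem_zero] at h2
  rcases Nat.lt_or_ge iv l.length with h | h
  · have e1 : (l ++ [j])[iv] = l[iv] := List.getElem_append_left h
    have hm : (iv + 1) % (l.length + 1) = iv + 1 := Nat.mod_eq_of_lt (by omega)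
    rcases Nat.lt_or_ge (iv + 1) l.length with h2' | h2'
    · have e2 : (l ++ [j])[(iv + 1) % (l.length + 1)]'(by rw [hm]; simp; omega) = l[iv + 1] := by
        simp only [hm]
        exact List.getElem_append_left h2'
      rw [e1, e2]
      have := List.isChain_iff_getElem.1 hch iv (by omega)
      simpa using this
    · have hiv' : iv = l.length - 1 := by omega
      have e2 : (l ++ [j])[(iv + 1) % (l.length + 1)]'(by rw [hm]; simp; omega) = j := by
        simp only [hm]
        rw [List.getElem_append_right (by omega)]
        simp
      rw [e1, e2]
      have : l[iv] = l[l.length - 1]'(by omega) := by congr 1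
      rw [this]
      exact h1
  · have hiv' : iv = l.length := by omega
    subst hiv'
    have e1 : (l ++ [j])[l.length] = j := by
      rw [List.getElem_append_right (le_refl _)]
      simp
    have hm : (l.length + 1) % (l.length + 1) = 0 := Nat.mod_self _
    have e2 : (l ++ [j])[(l.length + 1) % (l.length + 1)]'(by rw [hm]; simp) = l[0] := by
      simp only [hm]
      exact List.getElem_append_left hL
    rw [e1, e2]
    exact h2

end AuxLemmas

/-- **Lemma 5 (ii).** `H` is the subgraph of `G` induced by the endpoints
`{xᵢ, yᵢ : i ∈ T}` of the matching edges indexed by `T`; `M₀(H)` is indexed by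
`S ∩ T`.  `P` is a feasible path (index list `l`, end-vertices `u = x_{head}`,
`v = y_{last}`) which is either disjoint from `H` or a single `M₀`-edge of `H`.
`f = x_b y_b ∈ M₀(H)` is disjoint from `P`.  If for every `g ∈ M₀(H)` disjoint from
`P` there is no feasible cycle `C` of `M₀`-length `l_{M₀}(P) + 1` with
`V(P) ∪ V(g) ⊆ V(C)`, then with `R = {u, v, u′, v′}` one has
`e(R, M₀(H)) ≤ e({u,v}, f) + 3|M₀(H)| − 1`; moreover if `P` is the single edge
`x_a y_a ∈ M₀(H)` and `[V(H)]` has no feasible cycle of `M₀`-length `2`, then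
`e(R, M₀(H)) ≤ 2|M₀(H)|` when `e(f, P) = 0` and `e(R, M₀(H)) ≤ 2|M₀(H)| + 2`
when `e(f, P) = 1`. -/

theorem stmt9 (n : ℕ) (G : SimpleGraph (Fin n ⊕ Fin n))
    (hX : ∀ i j : Fin n, ¬ G.Adj (Sum.inl i) (Sum.inl j))
    (hY : ∀ i j : Fin n, ¬ G.Adj (Sum.inr i) (Sum.inr j))
    (hM : ∀ i : Fin n, G.Adj (Sum.inl i) (Sum.inr i))
    (S : Finset (Fin n))
    (T : Finset (Fin n))
    (l : List (Fin n)) (hne : l ≠ []) (hP : FeasPath G S l)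
    (hPH : (∀ i ∈ l, i ∉ T) ∨ (∃ a, l = [a] ∧ a ∈ S ∧ a ∈ T))
    (b : Fin n) (hbS : b ∈ S) (hbT : b ∈ T) (hbl : b ∉ l)
    (hno : ∀ b' : Fin n, b' ∈ S → b' ∈ T → b' ∉ l →
      ¬ ∃ c : List (Fin n), AltCycle G c ∧
        (c.toFinset ∩ S).card = (l.toFinset ∩ S).card + 1 ∧
        (∀ i ∈ l, i ∈ c) ∧ b' ∈ c) :
    ((eBtw G ({Sum.inl (l.head hne), Sum.inr (l.getLast hne), Sum.inl b, Sum.inr b} :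
        Set (Fin n ⊕ Fin n)) (iVerts ↑(S ∩ T)) : ℤ) ≤
      (eBtw G ({Sum.inl (l.head hne), Sum.inr (l.getLast hne)} : Set (Fin n ⊕ Fin n))
        ({Sum.inl b, Sum.inr b} : Set (Fin n ⊕ Fin n)) : ℤ) + 3 * (S ∩ T).card - 1) ∧
    (∀ a : Fin n, l = [a] → a ∈ T →
      (¬ ∃ c : List (Fin n), AltCycle G c ∧ (∀ i ∈ c, i ∈ T) ∧
        (c.toFinset ∩ S).card = 2) →
      (eBtw G ({Sum.inl b, Sum.inr b} : Set (Fin n ⊕ Fin n))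
          ({Sum.inl a, Sum.inr a} : Set (Fin n ⊕ Fin n)) = 0 →
        eBtw G ({Sum.inl (l.head hne), Sum.inr (l.getLast hne), Sum.inl b, Sum.inr b} :
          Set (Fin n ⊕ Fin n)) (iVerts ↑(S ∩ T)) ≤ 2 * (S ∩ T).card) ∧
      (eBtw G ({Sum.inl b, Sum.inr b} : Set (Fin n ⊕ Fin n))
          ({Sum.inl a, Sum.inr a} : Set (Fin n ⊕ Fin n)) = 1 →
        eBtw G ({Sum.inl (l.head hne), Sum.inr (l.getLast hne), Sum.inl b, Sum.inr b} :
          Set (Fin n ⊕ Fin n)) (iVerts ↑(S ∩ T)) ≤ 2 * (S ∩ T).card + 2)) := by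
  classical
  obtain ⟨⟨_, hlnd, hch⟩, hends⟩ := hP
  obtain ⟨huS, hvS⟩ := hends hne
  -- the key "no cycle through P and a matching edge" consequence
  have H1 : ∀ i : Fin n, i ∈ S → i ∈ T → i ∉ l →
      ¬ (G.Adj (inl (l.head hne)) (inr i) ∧ G.Adj (inr (l.getLast hne)) (inl i)) := by
    rintro i hiS hiT hil ⟨ha1, ha2⟩
    refine hno i hiS hiT hil
      ⟨l ++ [i], altCycle_append G l hne hlnd hch i hil ha2 ha1.symm, ?_, ?_, ?_⟩
    · have ht : (l ++ [i]).toFinset = insert i l.toFinset := by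
        ext x
        simp [List.toFinset_append, or_comm]
      rw [ht, Finset.insert_inter_of_mem hiS,
        Finset.card_insert_of_notMem (by simp [hil])]
    · exact fun x hx => List.mem_append_left _ hx
    · simp
  -- splitting edges from R by their R-endpoint
  have hsplit : ∀ i : Fin n,
      (ES G {inl (l.head hne), inr (l.getLast hne), inl b, inr b} {inl i, inr i}).ncard ≤
        (ES G {inl (l.head hne), inr (l.getLast hne)} {inl i, inr i}).ncard +
        (ES G {inl b, inr b} {inl i, inr i}).ncard :=
    fun i => ncard_le_add (ES_R_split _ _ _ _)
  have key := eBtw_le_sum G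
    ({inl (l.head hne), inr (l.getLast hne), inl b, inr b} : Set (Fin n ⊕ Fin n)) (S ∩ T)
  have hbST : b ∈ S ∩ T := Finset.mem_inter.2 ⟨hbS, hbT⟩
  -- bound at i = b
  have tb : (ES G {inl (l.head hne), inr (l.getLast hne), inl b, inr b}
      {inl b, inr b}).ncard ≤
      eBtw G ({inl (l.head hne), inr (l.getLast hne)} : Set (Fin n ⊕ Fin n))
        ({inl b, inr b} : Set (Fin n ⊕ Fin n)) + 1 := by
    refine (hsplit b).trans (add_le_add ?_ (ES_diag_le_one hX hY b))
    exact le_of_eq rfl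
  -- generic bound at i ∉ l, i ≠ b
  have tother : ∀ i : Fin n, i ∈ S → i ∈ T → i ∉ l →
      (ES G {inl (l.head hne), inr (l.getLast hne), inl b, inr b} {inl i, inr i}).ncard ≤ 3 := by
    intro i hiS hiT hil
    refine (hsplit i).trans ?_
    have h1 := ES_pair_le_one hX hY (H1 i hiS hiT hil)
    have h2 := ES_pair_le_two hX hY b b i
    omega
  constructor
  · -- Part 1
    rcases hPH with hdisj | ⟨a, hla, haS, haT⟩
    · -- P disjoint from H
      have hsum : ∑ i ∈ S ∩ T,
          (ES G {inl (l.head hne), inr (l.getLast hne), inl b, inr b} {inl i, inr i}).ncard =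
          (ES G {inl (l.head hne), inr (l.getLast hne), inl b, inr b} {inl b, inr b}).ncard +
          ∑ i ∈ (S ∩ T).erase b,
            (ES G {inl (l.head hne), inr (l.getLast hne), inl b, inr b} {inl i, inr i}).ncard :=
        (Finset.add_sum_erase _ _ hbST).symm
      have hrest : ∑ i ∈ (S ∩ T).erase b,
          (ES G {inl (l.head hne), inr (l.getLast hne), inl b, inr b}
            {inl i, inr i}).ncard ≤ ((S ∩ T).erase b).card * 3 := by
        refine le_trans (Finset.sum_le_card_nsmul _ _ 3 ?_) (by simp [smul_eq_mul])
        intro x hx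
        have hxm := Finset.mem_of_mem_erase hx
        have hxS := (Finset.mem_inter.1 hxm).1
        have hxT := (Finset.mem_inter.1 hxm).2
        exact tother x hxS hxT (fun hc => hdisj x hc hxT)
      have hcard := Finset.card_erase_add_one hbST
      have hfin : eBtw G ({inl (l.head hne), inr (l.getLast hne), inl b, inr b} :
          Set (Fin n ⊕ Fin n)) (iVerts ↑(S ∩ T)) ≤
          eBtw G ({inl (l.head hne), inr (l.getLast hne)} : Set (Fin n ⊕ Fin n))
            ({inl b, inr b} : Set (Fin n ⊕ Fin n)) + 1 + ((S ∩ T).erase b).card * 3 := by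
        calc _ ≤ _ := key
        _ = _ := hsum
        _ ≤ _ := add_le_add tb hrest
      omega
    · -- P is a single M₀-edge of H
      subst hla
      simp only [List.head_cons, List.getLast_singleton] at *
      have hab : a ≠ b := fun h => hbl (by simp [h])
      have haST : a ∈ S ∩ T := Finset.mem_inter.2 ⟨haS, haT⟩
      have hbST' : b ∈ (S ∩ T).erase a := Finset.mem_erase.2 ⟨hab.symm, hbST⟩
      have ta : (ES G {inl a, inr a, inl b, inr b} {inl a, inr a}).ncard ≤ 2 := by
        refine (hsplit a).trans ?_
        have h1 := ES_diag_le_one hX hY (G := G) a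
        have h2 : (ES G {inl b, inr b} {inl a, inr a}).ncard ≤ 1 := by
          refine ES_pair_le_one hX hY ?_
          rintro ⟨x1, x2⟩
          exact H1 b hbS hbT hbl ⟨x2.symm, x1.symm⟩
        omega
      have hsum : ∑ i ∈ S ∩ T,
          (ES G {inl a, inr a, inl b, inr b} {inl i, inr i}).ncard =
          (ES G {inl a, inr a, inl b, inr b} {inl a, inr a}).ncard +
          ((ES G {inl a, inr a, inl b, inr b} {inl b, inr b}).ncard +
            ∑ i ∈ ((S ∩ T).erase a).erase b,
              (ES G {inl a, inr a, inl b, inr b} {inl i, inr i}).ncard) := by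
        rw [← Finset.add_sum_erase _
            (fun i => (ES G {inl a, inr a, inl b, inr b} {inl i, inr i}).ncard) haST,
          ← Finset.add_sum_erase _
            (fun i => (ES G {inl a, inr a, inl b, inr b} {inl i, inr i}).ncard) hbST']
      have hrest : ∑ i ∈ ((S ∩ T).erase a).erase b,
          (ES G {inl a, inr a, inl b, inr b} {inl i, inr i}).ncard ≤
          (((S ∩ T).erase a).erase b).card * 3 := by
        refine le_trans (Finset.sum_le_card_nsmul _ _ 3 ?_) (by simp [smul_eq_mul])
        intro x hx
        have hxa : x ≠ a := (Finset.mem_erase.1 (Finset.mem_of_mem_erase hx)).1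
        have hxm := Finset.mem_of_mem_erase (Finset.mem_of_mem_erase hx)
        exact tother x (Finset.mem_inter.1 hxm).1 (Finset.mem_inter.1 hxm).2
          (by simp [hxa])
      have hc1 := Finset.card_erase_add_one hbST'
      have hc2 := Finset.card_erase_add_one haST
      have hfin : eBtw G ({inl a, inr a, inl b, inr b} :
          Set (Fin n ⊕ Fin n)) (iVerts ↑(S ∩ T)) ≤
          2 + (eBtw G ({inl a, inr a} : Set (Fin n ⊕ Fin n))
            ({inl b, inr b} : Set (Fin n ⊕ Fin n)) + 1 +
            (((S ∩ T).erase a).erase b).card * 3) := by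
        calc _ ≤ _ := key
        _ = _ := hsum
        _ ≤ _ := add_le_add ta (add_le_add tb hrest)
      omega
  · -- Part 2
    rintro a hla haT hC
    subst hla
    simp only [List.head_cons, List.getLast_singleton] at *
    have haS : a ∈ S := huS
    have hab : a ≠ b := fun h => hbl (by simp [h])
    have haST : a ∈ S ∩ T := Finset.mem_inter.2 ⟨haS, haT⟩
    have hbST' : b ∈ (S ∩ T).erase a := Finset.mem_erase.2 ⟨hab.symm, hbST⟩
    -- no feasible 2-cycles inside H
    have H3 : ∀ p i : Fin n, p ∈ S → p ∈ T → i ∈ S → i ∈ T → p ≠ i →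
        ¬ (G.Adj (inl p) (inr i) ∧ G.Adj (inr p) (inl i)) := by
      rintro p i hpS hpT hiS hiT hpi ⟨h1', h2'⟩
      refine hC ⟨[p] ++ [i],
        altCycle_append G [p] (by simp) (by simp) (List.isChain_singleton _) i
          (by simp [Ne.symm hpi]) (by simpa using h2') (by simpa using h1'.symm), ?_, ?_⟩
      · intro x hx
        rcases (by simpa using hx : x = p ∨ x = i) with rfl | rfl
        · exact hpT
        · exact hiT
      · have ht : (([p] ++ [i]) : List (Fin n)).toFinset = {p, i} := by
          simp [List.toFinset_cons]
        rw [ht, Finset.insert_inter_of_mem hpS, Finset.singleton_inter_of_mem hiS,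
          Finset.card_insert_of_notMem (by simp [hpi])]
        simp
    -- bounds
    have ta2 : (ES G {inl a, inr a, inl b, inr b} {inl a, inr a}).ncard ≤
        1 + eBtw G ({inl b, inr b} : Set (Fin n ⊕ Fin n))
          ({inl a, inr a} : Set (Fin n ⊕ Fin n)) := by
      refine (hsplit a).trans (add_le_add (ES_diag_le_one hX hY a) ?_)
      exact le_of_eq rfl
    have tb2 : (ES G {inl a, inr a, inl b, inr b} {inl b, inr b}).ncard ≤
        eBtw G ({inl b, inr b} : Set (Fin n ⊕ Fin n))
          ({inl a, inr a} : Set (Fin n ⊕ Fin n)) + 1 := by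
      refine (hsplit b).trans (add_le_add ?_ (ES_diag_le_one hX hY b))
      rw [eBtw_eq_ES, ES_comm]
    have trest : ∀ i : Fin n, i ∈ S → i ∈ T → i ≠ a → i ≠ b →
        (ES G {inl a, inr a, inl b, inr b} {inl i, inr i}).ncard ≤ 2 := by
      intro i hiS hiT hia hib
      refine (hsplit i).trans ?_
      have h1 := ES_pair_le_one hX hY (G := G) (p := a) (q := a) (j := i)
        (H3 a i haS haT hiS hiT (Ne.symm hia))
      have h2 := ES_pair_le_one hX hY (G := G) (p := b) (q := b) (j := i)
        (H3 b i hbS hbT hiS hiT (Ne.symm hib))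
      omega
    have hsum : ∑ i ∈ S ∩ T,
        (ES G {inl a, inr a, inl b, inr b} {inl i, inr i}).ncard =
        (ES G {inl a, inr a, inl b, inr b} {inl a, inr a}).ncard +
        ((ES G {inl a, inr a, inl b, inr b} {inl b, inr b}).ncard +
          ∑ i ∈ ((S ∩ T).erase a).erase b,
            (ES G {inl a, inr a, inl b, inr b} {inl i, inr i}).ncard) := by
      rw [← Finset.add_sum_erase _
          (fun i => (ES G {inl a, inr a, inl b, inr b} {inl i, inr i}).ncard) haST,
        ← Finset.add_sum_erase _
          (fun i => (ES G {inl a, inr a, inl b, inr b} {inl i, inr i}).ncard) hbST']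
    have hrest : ∑ i ∈ ((S ∩ T).erase a).erase b,
        (ES G {inl a, inr a, inl b, inr b} {inl i, inr i}).ncard ≤
        (((S ∩ T).erase a).erase b).card * 2 := by
      refine le_trans (Finset.sum_le_card_nsmul _ _ 2 ?_) (by simp [smul_eq_mul])
      intro x hx
      have hxb : x ≠ b := (Finset.mem_erase.1 hx).1
      have hxa : x ≠ a := (Finset.mem_erase.1 (Finset.mem_of_mem_erase hx)).1
      have hxm := Finset.mem_of_mem_erase (Finset.mem_of_mem_erase hx)
      exact trest x (Finset.mem_inter.1 hxm).1 (Finset.mem_inter.1 hxm).2 hxa hxb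
    have hc1 := Finset.card_erase_add_one hbST'
    have hc2 := Finset.card_erase_add_one haST
    have hfin : eBtw G ({inl a, inr a, inl b, inr b} :
        Set (Fin n ⊕ Fin n)) (iVerts ↑(S ∩ T)) ≤
        (1 + eBtw G ({inl b, inr b} : Set (Fin n ⊕ Fin n))
          ({inl a, inr a} : Set (Fin n ⊕ Fin n))) +
        ((eBtw G ({inl b, inr b} : Set (Fin n ⊕ Fin n))
          ({inl a, inr a} : Set (Fin n ⊕ Fin n)) + 1) +
          (((S ∩ T).erase a).erase b).card * 2) := by
      calc _ ≤ _ := key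
      _ = _ := hsum
      _ ≤ _ := add_le_add ta2 (add_le_add tb2 hrest)
    constructor
    · intro hq0
      rw [hq0] at hfin
      omega
    · intro hq1
      rw [hq1] at hfin
      omega
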